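/- The pull-back by α²_M of the Liouville 1-form θ_{∧²TM} on T*(∧²TM) equals −d_T^2 θ²_M, and the pull-back by β²_M of the Liouville 1-form θ_{∧²T*M} on T*(∧²T*M) equals i_T^2 ω²_M, as 1-forms on ∧²T(∧²T*M). Consequently (α²_M)* ω_{∧²TM} = d_T^2 ω²_M = (β²_M)* ω_{∧²T*M}, where ω denotes the respective canonical symplectic forms. -/

import Mathlib

noncomputable section

/-- Coordinate model of vectors: functions on an index set. -/
abbrev Vec (ι : Type) := ι → ℝ

/-- Coordinate model of bivectors on `Vec ι`: (antisymmetric) matrices. -/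
abbrev Biv (ι : Type) := ι → ι → ℝ

/-- Antisymmetry of a bivector matrix. -/
def IsAnti {ι : Type} (u : Biv ι) : Prop := ∀ a b, u a b = - u b a

/-- Raw coordinate model of the exterior derivative of a `k`-form
(given as a function of a point and `k` tangent vectors). -/
def Dext {A : Type} [NormedAddCommGroup A] [NormedSpace ℝ A] {k : ℕ}
    (φ : A → (Fin k → A) → ℝ) : A → (Fin (k+1) → A) → ℝ :=
  fun x w => ∑ i : Fin (k+1), (-1 : ℝ)^(i : ℕ) *
    fderiv ℝ (fun y => φ y (fun j => w (i.succAbove j))) x (w i)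

/-- Pull-back of a raw `k`-form along a map. -/
def pullF {A B : Type} [NormedAddCommGroup A] [NormedSpace ℝ A]
    [NormedAddCommGroup B] [NormedSpace ℝ B] {k : ℕ}
    (f : A → B) (φ : B → (Fin k → B) → ℝ) : A → (Fin k → A) → ℝ :=
  fun x w => φ (f x) (fun i => fderiv ℝ f x (w i))

/-- The operator `i_T^2`: insertion of the bivector into the first two slots of a
`(k+2)`-form on the base, producing a semi-basic `k`-form on `∧²TN`
(modelled on `Vec ι × Biv ι`; only the base components of the arguments are used,
reflecting semi-basicity). -/
def iT2 {ι : Type} [Fintype ι] [DecidableEq ι] {k : ℕ}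
    (φ : Vec ι → (Fin (k+2) → Vec ι) → ℝ) :
    (Vec ι × Biv ι) → (Fin k → Vec ι × Biv ι) → ℝ :=
  fun p w => (1/2 : ℝ) * ∑ a, ∑ b, p.2 a b *
    φ p.1 (Matrix.vecCons (Pi.single a 1)
      (Matrix.vecCons (Pi.single b 1) (fun i => (w i).1)))

/-- The operator `d_T^2 = d ∘ i_T^2 − i_T^2 ∘ d` on `(k+2)`-forms, `k ≥ 0`. -/
def dT2 {ι : Type} [Fintype ι] [DecidableEq ι] {k : ℕ}
    (φ : Vec ι → (Fin (k+2) → Vec ι) → ℝ) :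
    (Vec ι × Biv ι) → (Fin (k+1) → Vec ι × Biv ι) → ℝ :=
  fun p w => Dext (iT2 φ) p w - iT2 (Dext φ) p w

/-- `i_T^2` on 1-forms lands in `(−1)`-forms, i.e. is zero. -/
def iT2one {ι : Type} (_φ : Vec ι → (Fin 1 → Vec ι) → ℝ) :
    (Vec ι × Biv ι) → ℝ := fun _ => 0

/-- `d_T^2` on 1-forms: `d ∘ i_T^2 − i_T^2 ∘ d = − i_T^2 ∘ d`. -/
def dT2one {ι : Type} [Fintype ι] [DecidableEq ι]
    (φ : Vec ι → (Fin 1 → Vec ι) → ℝ) : (Vec ι × Biv ι) → ℝ :=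
  fun p => - iT2 (Dext φ) p (fun i => i.elim0)

end

noncomputable section

/-- Pairing of covector components with tangent components:
`⟨(c₁, c₂), (v₁, v₂)⟩ = ∑ c₁ v₁ + (1/2) ∑ c₂ v₂`. -/
def covPair {ι : Type} [Fintype ι] (c : Vec ι × Biv ι) (v : Vec ι × Biv ι) : ℝ :=
  (∑ ρ, c.1 ρ * v.1 ρ) + (1/2 : ℝ) * ∑ l, ∑ k, c.2 l k * v.2 l k

/-- Antisymmetry constraints for a point/tangent datum of `∧²T(∧²T*M)`. -/
def GoodP {ι : Type} (z : Vec (ι ⊕ ι × ι) × Biv (ι ⊕ ι × ι)) : Prop :=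
  (∀ μ ν, z.1 (Sum.inr (μ, ν)) = - z.1 (Sum.inr (ν, μ))) ∧ IsAnti z.2 ∧
  (∀ i μ ν, z.2 i (Sum.inr (μ, ν)) = - z.2 i (Sum.inr (ν, μ)))



set_option linter.unusedSectionVars false

noncomputable section
variable {E F : Type*} [NormedAddCommGroup E] [NormedSpace ℝ E] [FiniteDimensional ℝ E]
    [NormedAddCommGroup F] [NormedSpace ℝ F]

def linCLM (f : E → F)
    (h1 : ∀ x y, f (x + y) = f x + f y) (h2 : ∀ (c : ℝ) x, f (c • x) = c • f x) : E →L[ℝ] F :=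
  LinearMap.toContinuousLinearMap (IsLinearMap.mk' f ⟨h1, h2⟩)

lemma hasFDerivAt_lin (f : E → F) (h1 : ∀ x y, f (x + y) = f x + f y)
    (h2 : ∀ (c : ℝ) x, f (c • x) = c • f x) (x : E) :
    HasFDerivAt f (linCLM f h1 h2) x := (linCLM f h1 h2).hasFDerivAt

lemma fderiv_lin_apply (f : E → F) (h1 : ∀ x y, f (x + y) = f x + f y)
    (h2 : ∀ (c : ℝ) x, f (c • x) = c • f x) (x v : E) :
    fderiv ℝ f x v = f v := by
  rw [(hasFDerivAt_lin f h1 h2 x).fderiv]; rfl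

lemma diff_lin (f : E → F) (h1 : ∀ x y, f (x + y) = f x + f y)
    (h2 : ∀ (c : ℝ) x, f (c • x) = c • f x) (x : E) :
    DifferentiableAt ℝ f x := (hasFDerivAt_lin f h1 h2 x).differentiableAt

end

noncomputable section
variable {ι : Type} [Fintype ι] [DecidableEq ι]

/-- The basic 2-form coefficient function. -/
def Fform (u v0 v1 : Vec (ι ⊕ ι × ι)) : ℝ :=
  (1/2 : ℝ) * ∑ μ, ∑ ν, u (Sum.inr (μ, ν)) *
    (v0 (Sum.inl μ) * v1 (Sum.inl ν) - v1 (Sum.inl μ) * v0 (Sum.inl ν))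

def thetaF : Vec (ι ⊕ ι × ι) → (Fin 2 → Vec (ι ⊕ ι × ι)) → ℝ :=
  fun b w => Fform b (w 0) (w 1)

lemma Fform_add (a b : Vec (ι ⊕ ι × ι)) (v0 v1 : Vec (ι ⊕ ι × ι)) :
    Fform (a + b) v0 v1 = Fform a v0 v1 + Fform b v0 v1 := by
  simp [Fform, add_mul, Finset.sum_add_distrib, mul_add]

lemma Fform_smul (c : ℝ) (a : Vec (ι ⊕ ι × ι)) (v0 v1 : Vec (ι ⊕ ι × ι)) :
    Fform (c • a) v0 v1 = c * Fform a v0 v1 := by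
  simp [Fform, Finset.mul_sum, mul_assoc]
  ring_nf

lemma fderiv_Fform (a b : Vec (ι ⊕ ι × ι)) (x v : Vec (ι ⊕ ι × ι)) :
    fderiv ℝ (fun y => Fform y a b) x v = Fform v a b :=
  fderiv_lin_apply _ (fun x y => Fform_add x y a b) (fun c x => Fform_smul c x a b) x v

lemma Dext_thetaF : Dext (thetaF (ι := ι)) = fun _ w =>
    Fform (w 0) (w 1) (w 2) - Fform (w 1) (w 0) (w 2) + Fform (w 2) (w 0) (w 1) := by
  funext x w
  unfold Dext
  rw [Fin.sum_univ_three]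
  simp only [thetaF]
  norm_num [Fin.succAbove, Fin.lt_def, fderiv_Fform]
  ring

lemma Fform_single_inl (η : ι) (v0 v1 : Vec (ι ⊕ ι × ι)) :
    Fform (Pi.single (Sum.inl η) 1) v0 v1 = 0 := by
  simp [Fform, Pi.single_apply]

lemma Fform_single_inr (μ ν : ι) (v0 v1 : Vec (ι ⊕ ι × ι)) :
    Fform (Pi.single (Sum.inr (μ, ν)) 1) v0 v1 =
      (1/2 : ℝ) * (v0 (Sum.inl μ) * v1 (Sum.inl ν) - v1 (Sum.inl μ) * v0 (Sum.inl ν)) := by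
  simp [Fform, Pi.single_apply, Prod.ext_iff, ite_and]

lemma Fform_u_inl_inl (u : Vec (ι ⊕ ι × ι)) (η κ : ι) :
    Fform u (Pi.single (Sum.inl η) 1) (Pi.single (Sum.inl κ) 1) =
      (1/2 : ℝ) * (u (Sum.inr (η, κ)) - u (Sum.inr (κ, η))) := by
  simp [Fform, Pi.single_apply, ite_mul, mul_ite, Finset.sum_ite_eq, Finset.sum_ite_eq',
    mul_sub, Finset.sum_sub_distrib]

lemma Fform_u_inr_right (u v : Vec (ι ⊕ ι × ι)) (p : ι × ι) :
    Fform u v (Pi.single (Sum.inr p) 1) = 0 := by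
  simp [Fform, Pi.single_apply]

lemma Fform_u_inr_left (u v : Vec (ι ⊕ ι × ι)) (p : ι × ι) :
    Fform u (Pi.single (Sum.inr p) 1) v = 0 := by
  simp [Fform, Pi.single_apply]

lemma single_inl_inl (η μ : ι) :
    (Pi.single (Sum.inl η) (1:ℝ) : Vec (ι ⊕ ι × ι)) (Sum.inl μ) = if μ = η then 1 else 0 := by
  simp [Pi.single_apply]

lemma sum2_congr {α β : Type} [Fintype α] [Fintype β] {f g : α → β → ℝ}
    (h : ∀ a b, f a b = g a b) : ∑ a, ∑ b, f a b = ∑ a, ∑ b, g a b := by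
  exact Finset.sum_congr rfl fun a _ => Finset.sum_congr rfl fun b _ => h a b

lemma mul_sum2 {α β : Type} [Fintype α] [Fintype β] (c : ℝ) (f : α → β → ℝ) :
    c * ∑ a, ∑ b, f a b = ∑ a, ∑ b, c * f a b := by
  simp [Finset.mul_sum]

/-- Closed form of the one-form `i_T² dθ` (fused into one double sum). -/
def psiC (u : Vec (ι ⊕ ι × ι)) (y : Vec (ι ⊕ ι × ι) × Biv (ι ⊕ ι × ι)) : ℝ :=
  ∑ η, ∑ κ, (1/4 : ℝ) *
    (y.2 (Sum.inl η) (Sum.inl κ) * (u (Sum.inr (η, κ)) - u (Sum.inr (κ, η)))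
     - y.2 (Sum.inl η) (Sum.inr (η, κ)) * u (Sum.inl κ)
     + y.2 (Sum.inl η) (Sum.inr (κ, η)) * u (Sum.inl κ)
     + y.2 (Sum.inr (η, κ)) (Sum.inl η) * u (Sum.inl κ)
     - y.2 (Sum.inr (η, κ)) (Sum.inl κ) * u (Sum.inl η))

lemma psiC_expand (u : Vec (ι ⊕ ι × ι)) (y : Vec (ι ⊕ ι × ι) × Biv (ι ⊕ ι × ι)) :
    psiC u y =
      (1/4 : ℝ) * ∑ η, ∑ κ, y.2 (Sum.inl η) (Sum.inl κ) * (u (Sum.inr (η, κ)) - u (Sum.inr (κ, η)))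
      - (1/4 : ℝ) * ∑ η, ∑ ν, y.2 (Sum.inl η) (Sum.inr (η, ν)) * u (Sum.inl ν)
      + (1/4 : ℝ) * ∑ η, ∑ μ, y.2 (Sum.inl η) (Sum.inr (μ, η)) * u (Sum.inl μ)
      + (1/4 : ℝ) * ∑ μ, ∑ ν, y.2 (Sum.inr (μ, ν)) (Sum.inl μ) * u (Sum.inl ν)
      - (1/4 : ℝ) * ∑ μ, ∑ ν, y.2 (Sum.inr (μ, ν)) (Sum.inl ν) * u (Sum.inl μ) := by
  simp only [psiC, mul_sub, mul_add, Finset.sum_sub_distrib, Finset.sum_add_distrib,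
    ← Finset.mul_sum]

lemma psi_eval (z : Vec (ι ⊕ ι × ι) × Biv (ι ⊕ ι × ι))
    (w : Fin 1 → Vec (ι ⊕ ι × ι) × Biv (ι ⊕ ι × ι)) :
    iT2 (Dext (thetaF (ι := ι))) z w = psiC ((w 0).1) z := by
  rw [iT2, Dext_thetaF, psiC_expand]
  simp only [Matrix.cons_val_zero, Matrix.cons_val_one, Matrix.head_cons,
    Matrix.cons_val_two, Matrix.tail_cons]
  simp only [Fintype.sum_sum_type, Fintype.sum_prod_type,
    Fform_single_inl, Fform_single_inr, Fform_u_inl_inl, Fform_u_inr_right, Fform_u_inr_left,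
    single_inl_inl, ite_mul, mul_ite, one_mul, zero_mul, mul_zero, mul_one,
    Finset.sum_ite_eq, Finset.sum_ite_eq', Finset.mem_univ, if_true,
    zero_sub, sub_zero, zero_add, add_zero, mul_neg, neg_mul, mul_sub, sub_eq_add_neg,
    Finset.sum_add_distrib, Finset.sum_neg_distrib, Finset.mul_sum, neg_neg, neg_zero,
    Matrix.vecHead, Pi.single_apply]
  simp only [Sum.inl.injEq, mul_sub, sub_mul, mul_add, add_mul, mul_ite, ite_mul, mul_zero,
    zero_mul, mul_one, one_mul,
    Finset.sum_ite_eq, Finset.sum_ite_eq', Finset.sum_ite_irrel, Finset.mem_univ, if_true,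
    reduceCtorEq, if_false,
    Finset.sum_const_zero, add_zero, zero_add, neg_zero, mul_neg, neg_mul, neg_neg,
    Finset.sum_neg_distrib, Finset.sum_add_distrib, Finset.sum_sub_distrib, Finset.mul_sum]
  ring_nf

lemma psiC_add (u : Vec (ι ⊕ ι × ι)) (x y : Vec (ι ⊕ ι × ι) × Biv (ι ⊕ ι × ι)) :
    psiC u (x + y) = psiC u x + psiC u y := by
  unfold psiC
  simp only [← Finset.sum_add_distrib]
  refine sum2_congr fun a b => ?_
  simp only [Prod.snd_add, Pi.add_apply]
  ring

lemma psiC_smul (u : Vec (ι ⊕ ι × ι)) (c : ℝ) (x : Vec (ι ⊕ ι × ι) × Biv (ι ⊕ ι × ι)) :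
    psiC u (c • x) = c * psiC u x := by
  unfold psiC
  rw [mul_sum2]
  refine sum2_congr fun a b => ?_
  simp only [Prod.smul_snd, Pi.smul_apply, smul_eq_mul]
  ring

lemma linCLM_apply {E F : Type*} [NormedAddCommGroup E] [NormedSpace ℝ E] [FiniteDimensional ℝ E]
    [NormedAddCommGroup F] [NormedSpace ℝ F] (f : E → F)
    (h1 : ∀ x y, f (x + y) = f x + f y) (h2 : ∀ (c : ℝ) x, f (c • x) = c • f x) (v : E) :
    linCLM f h1 h2 v = f v := rfl

lemma fderiv_psiC (u : Vec (ι ⊕ ι × ι)) (z v : Vec (ι ⊕ ι × ι) × Biv (ι ⊕ ι × ι)) :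
    fderiv ℝ (psiC u) z v = psiC u v :=
  fderiv_lin_apply _ (psiC_add u) (fun c x => by rw [psiC_smul]; rfl) z v

/-- The function `i_T² θ` (a 0-form), fused. -/
def GC (y : Vec (ι ⊕ ι × ι) × Biv (ι ⊕ ι × ι)) : ℝ :=
  ∑ μ, ∑ ν, (1/4 : ℝ) *
    (y.2 (Sum.inl μ) (Sum.inl ν) * (y.1 (Sum.inr (μ, ν)) - y.1 (Sum.inr (ν, μ))))

/-- Its differential. -/
def DGC (z w : Vec (ι ⊕ ι × ι) × Biv (ι ⊕ ι × ι)) : ℝ :=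
  ∑ μ, ∑ ν, (1/4 : ℝ) *
    (w.2 (Sum.inl μ) (Sum.inl ν) * (z.1 (Sum.inr (μ, ν)) - z.1 (Sum.inr (ν, μ)))
     + z.2 (Sum.inl μ) (Sum.inl ν) * (w.1 (Sum.inr (μ, ν)) - w.1 (Sum.inr (ν, μ))))

lemma iT2_thetaF_eval (p : Vec (ι ⊕ ι × ι) × Biv (ι ⊕ ι × ι))
    (w : Fin 0 → Vec (ι ⊕ ι × ι) × Biv (ι ⊕ ι × ι)) :
    iT2 (thetaF (ι := ι)) p w = GC p := by
  rw [iT2, GC]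
  simp only [thetaF, Matrix.cons_val_zero, Matrix.cons_val_one, Matrix.head_cons]
  simp only [Fintype.sum_sum_type, Fintype.sum_prod_type,
    Fform_u_inl_inl, Fform_u_inr_right, Fform_u_inr_left,
    mul_zero, Finset.sum_const_zero, add_zero, zero_add, Finset.mul_sum]
  refine sum2_congr fun a b => ?_
  ring

lemma coord2_add (μ ν : ι) (x y : Vec (ι ⊕ ι × ι) × Biv (ι ⊕ ι × ι)) :
    (x + y).2 (Sum.inl μ) (Sum.inl ν) = x.2 (Sum.inl μ) (Sum.inl ν) + y.2 (Sum.inl μ) (Sum.inl ν) := rfl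

lemma coord2_smul (μ ν : ι) (c : ℝ) (x : Vec (ι ⊕ ι × ι) × Biv (ι ⊕ ι × ι)) :
    (c • x).2 (Sum.inl μ) (Sum.inl ν) = c • x.2 (Sum.inl μ) (Sum.inl ν) := rfl

lemma coord1_add (μ ν : ι) (x y : Vec (ι ⊕ ι × ι) × Biv (ι ⊕ ι × ι)) :
    (x + y).1 (Sum.inr (μ, ν)) - (x + y).1 (Sum.inr (ν, μ)) =
      (x.1 (Sum.inr (μ, ν)) - x.1 (Sum.inr (ν, μ))) + (y.1 (Sum.inr (μ, ν)) - y.1 (Sum.inr (ν, μ))) := by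
  show (x.1 _ + y.1 _) - (x.1 _ + y.1 _) = _; ring

lemma coord1_smul (μ ν : ι) (c : ℝ) (x : Vec (ι ⊕ ι × ι) × Biv (ι ⊕ ι × ι)) :
    (c • x).1 (Sum.inr (μ, ν)) - (c • x).1 (Sum.inr (ν, μ)) =
      c • (x.1 (Sum.inr (μ, ν)) - x.1 (Sum.inr (ν, μ))) := by
  show (c * x.1 _) - (c * x.1 _) = _; simp [smul_eq_mul]; ring

lemma hasFDerivAt_coord2 (μ ν : ι) (x : Vec (ι ⊕ ι × ι) × Biv (ι ⊕ ι × ι)) :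
    HasFDerivAt (fun y : Vec (ι ⊕ ι × ι) × Biv (ι ⊕ ι × ι) => y.2 (Sum.inl μ) (Sum.inl ν))
      (linCLM (fun y : Vec (ι ⊕ ι × ι) × Biv (ι ⊕ ι × ι) => y.2 (Sum.inl μ) (Sum.inl ν))
        (coord2_add μ ν) (fun c x => coord2_smul μ ν c x)) x :=
  hasFDerivAt_lin _ _ _ x

lemma hasFDerivAt_coord1 (μ ν : ι) (x : Vec (ι ⊕ ι × ι) × Biv (ι ⊕ ι × ι)) :
    HasFDerivAt (fun y : Vec (ι ⊕ ι × ι) × Biv (ι ⊕ ι × ι) =>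
        y.1 (Sum.inr (μ, ν)) - y.1 (Sum.inr (ν, μ)))
      (linCLM (fun y : Vec (ι ⊕ ι × ι) × Biv (ι ⊕ ι × ι) =>
          y.1 (Sum.inr (μ, ν)) - y.1 (Sum.inr (ν, μ)))
        (coord1_add μ ν) (fun c x => coord1_smul μ ν c x)) x :=
  hasFDerivAt_lin _ _ _ x

lemma fderiv_GC (z w : Vec (ι ⊕ ι × ι) × Biv (ι ⊕ ι × ι)) :
    fderiv ℝ (GC (ι := ι)) z w = DGC z w := by
  have hmul := fun (μ ν : ι) =>
    (((hasFDerivAt_coord2 μ ν z).mul (hasFDerivAt_coord1 μ ν z)).const_mul (1/4 : ℝ))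
  have hsum := HasFDerivAt.fun_sum (fun (μ : ι) (_ : μ ∈ Finset.univ) =>
    HasFDerivAt.fun_sum (fun (ν : ι) (_ : ν ∈ Finset.univ) => hmul μ ν))
  have hfd : fderiv ℝ (GC (ι := ι)) z = _ := HasFDerivAt.fderiv hsum
  rw [hfd]
  simp only [DGC, ContinuousLinearMap.sum_apply, ContinuousLinearMap.add_apply,
    ContinuousLinearMap.smul_apply, ContinuousLinearMap.coe_smul', Pi.smul_apply,
    linCLM_apply, smul_eq_mul]
  refine sum2_congr fun a b => ?_
  ring

lemma Dext_iT2_thetaF (z : Vec (ι ⊕ ι × ι) × Biv (ι ⊕ ι × ι))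
    (w : Fin 1 → Vec (ι ⊕ ι × ι) × Biv (ι ⊕ ι × ι)) :
    Dext (iT2 (thetaF (ι := ι))) z w = DGC z (w 0) := by
  rw [Dext, Fin.sum_univ_one]
  have hfun : (fun y => iT2 (thetaF (ι := ι)) y
      (fun j => w ((0 : Fin 1).succAbove j))) = GC := by
    funext y; exact iT2_thetaF_eval y _
  rw [hfun]
  simp [fderiv_GC]

lemma DextDext_zero : Dext (Dext (thetaF (ι := ι))) = fun _ _ => 0 := by
  rw [Dext_thetaF]
  funext x w
  rw [Dext]
  simp

lemma iT2_DD_zero (z : Vec (ι ⊕ ι × ι) × Biv (ι ⊕ ι × ι))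
    (w : Fin 2 → Vec (ι ⊕ ι × ι) × Biv (ι ⊕ ι × ι)) :
    iT2 (Dext (Dext (thetaF (ι := ι)))) z w = 0 := by
  rw [DextDext_zero]
  simp [iT2]

lemma Dext_psi (z : Vec (ι ⊕ ι × ι) × Biv (ι ⊕ ι × ι))
    (w : Fin 2 → Vec (ι ⊕ ι × ι) × Biv (ι ⊕ ι × ι)) :
    Dext (iT2 (Dext (thetaF (ι := ι)))) z w =
      psiC ((w 1).1) (w 0) - psiC ((w 0).1) (w 1) := by
  rw [Dext, Fin.sum_univ_two]
  have hfun : ∀ i : Fin 2, (fun y => iT2 (Dext (thetaF (ι := ι))) y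
      (fun j => w (i.succAbove j))) = psiC ((w (i.succAbove 0)).1) := by
    intro i; funext y; exact psi_eval y _
  rw [hfun 0, hfun 1]
  norm_num [Fin.succAbove, Fin.lt_def, fderiv_psiC]
  ring

noncomputable section
variable {ι : Type} [Fintype ι] [DecidableEq ι]
set_option linter.unusedSectionVars false

lemma key1 (z w : Vec (ι ⊕ ι × ι) × Biv (ι ⊕ ι × ι)) (hz : GoodP z) :
    psiC w.1 z =
      (1/4 : ℝ) * ∑ μ, ∑ ν, z.2 (Sum.inl μ) (Sum.inl ν) *
          (w.1 (Sum.inr (μ, ν)) - w.1 (Sum.inr (ν, μ)))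
      - ∑ η, ∑ ν, z.2 (Sum.inl η) (Sum.inr (η, ν)) * w.1 (Sum.inl ν) := by
  obtain ⟨hz1, hz2, hz3⟩ := hz
  rw [psiC_expand]
  have t3 : ∑ η, ∑ μ, z.2 (Sum.inl η) (Sum.inr (μ, η)) * w.1 (Sum.inl μ)
      = - ∑ η, ∑ ν, z.2 (Sum.inl η) (Sum.inr (η, ν)) * w.1 (Sum.inl ν) := by
    simp only [← Finset.sum_neg_distrib]
    refine sum2_congr fun η μ => ?_
    rw [hz3 (Sum.inl η) μ η]; ring
  have t4 : ∑ μ, ∑ ν, z.2 (Sum.inr (μ, ν)) (Sum.inl μ) * w.1 (Sum.inl ν)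
      = - ∑ η, ∑ ν, z.2 (Sum.inl η) (Sum.inr (η, ν)) * w.1 (Sum.inl ν) := by
    simp only [← Finset.sum_neg_distrib]
    refine sum2_congr fun μ ν => ?_
    rw [hz2 (Sum.inr (μ, ν)) (Sum.inl μ)]; ring
  have t5 : ∑ μ, ∑ ν, z.2 (Sum.inr (μ, ν)) (Sum.inl ν) * w.1 (Sum.inl μ)
      = ∑ η, ∑ ν, z.2 (Sum.inl η) (Sum.inr (η, ν)) * w.1 (Sum.inl ν) := by
    have : ∑ μ, ∑ ν, z.2 (Sum.inr (μ, ν)) (Sum.inl ν) * w.1 (Sum.inl μ)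
        = ∑ μ, ∑ ν, z.2 (Sum.inl ν) (Sum.inr (ν, μ)) * w.1 (Sum.inl μ) := by
      refine sum2_congr fun μ ν => ?_
      rw [hz2 (Sum.inr (μ, ν)) (Sum.inl ν), hz3 (Sum.inl ν) μ ν]; ring
    rw [this, Finset.sum_comm]
  rw [t3, t4, t5]; ring

lemma keyS2 (z w : Vec (ι ⊕ ι × ι) × Biv (ι ⊕ ι × ι))
    (hw1 : ∀ μ ν, w.1 (Sum.inr (μ, ν)) = - w.1 (Sum.inr (ν, μ))) :
    ∑ μ, ∑ ν, z.2 (Sum.inl μ) (Sum.inl ν) * (w.1 (Sum.inr (μ, ν)) - w.1 (Sum.inr (ν, μ)))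
      = 2 * ∑ μ, ∑ ν, z.2 (Sum.inl μ) (Sum.inl ν) * w.1 (Sum.inr (μ, ν)) := by
  rw [mul_sum2]
  refine sum2_congr fun μ ν => ?_
  rw [hw1 ν μ]; ring

lemma keyDGC (z w : Vec (ι ⊕ ι × ι) × Biv (ι ⊕ ι × ι))
    (hz1 : ∀ μ ν, z.1 (Sum.inr (μ, ν)) = - z.1 (Sum.inr (ν, μ))) :
    DGC z w = (1/2 : ℝ) * ∑ μ, ∑ ν, w.2 (Sum.inl μ) (Sum.inl ν) * z.1 (Sum.inr (μ, ν))
      + (1/4 : ℝ) * ∑ μ, ∑ ν, z.2 (Sum.inl μ) (Sum.inl ν) *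
          (w.1 (Sum.inr (μ, ν)) - w.1 (Sum.inr (ν, μ))) := by
  rw [DGC, mul_sum2, mul_sum2]
  simp only [← Finset.sum_add_distrib]
  refine sum2_congr fun μ ν => ?_
  rw [hz1 ν μ]; ring

lemma lhs1 (z w : Vec (ι ⊕ ι × ι) × Biv (ι ⊕ ι × ι)) :
    ∑ x, (- ∑ η, z.2 (Sum.inl η) (Sum.inr (η, x))) * (w.1 ∘ Sum.inl) x
      = - ∑ η, ∑ ν, z.2 (Sum.inl η) (Sum.inr (η, ν)) * w.1 (Sum.inl ν) := by
  have h : ∀ x, (- ∑ η, z.2 (Sum.inl η) (Sum.inr (η, x))) * (w.1 ∘ Sum.inl) x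
      = ∑ η, -(z.2 (Sum.inl η) (Sum.inr (η, x)) * w.1 (Sum.inl x)) := by
    intro x
    rw [neg_mul, Finset.sum_mul, ← Finset.sum_neg_distrib]
    rfl
  rw [Finset.sum_congr rfl (fun x _ => h x), Finset.sum_comm]
  simp only [Finset.sum_neg_distrib]
end

/-!
STATEMENT 14: The pull-back by `α²_M` of the Liouville 1-form `θ_{∧²TM}` on `T*(∧²TM)`
equals `−d_T^2 θ²_M`, and the pull-back by `β²_M` of the Liouville 1-form `θ_{∧²T*M}` on
`T*(∧²T*M)` equals `i_T^2 ω²_M`, as 1-forms on `∧²T(∧²T*M)`.  Consequently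
`(α²_M)* ω_{∧²TM} = d_T^2 ω²_M = (β²_M)* ω_{∧²T*M}`.

Here `α²_M, β²_M` are given in coordinates by `(p_ρ, f_{λκ}) = (−y^η_{ηρ}, −p_{λκ})`
and `(f_ρ, q^{νσ}) = (−y^η_{ηρ}, ẋ^{νσ})`; `θ²_M = (1/2) p_{μν} dx^μ ∧ dx^ν`,
`ω²_M = dθ²_M`; the Liouville 1-form of a cotangent bundle is
`θ(z)(w) = ⟨covector part of z, base part of w⟩`, and the canonical symplectic form is
`ω(z)(w₁,w₂) = ⟨cov w₁, base w₂⟩ − ⟨cov w₂, base w₁⟩`.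
-/

theorem alpha_beta_pullback_liouville {ι : Type} [Fintype ι] [DecidableEq ι]
    (θ : Vec (ι ⊕ ι × ι) → (Fin 2 → Vec (ι ⊕ ι × ι)) → ℝ)
    (hθ : θ = fun b w => (1/2 : ℝ) * ∑ μ, ∑ ν, b (Sum.inr (μ, ν)) *
      (w 0 (Sum.inl μ) * w 1 (Sum.inl ν) - w 1 (Sum.inl μ) * w 0 (Sum.inl ν)))
    (A B : (Vec (ι ⊕ ι × ι) × Biv (ι ⊕ ι × ι)) → (Vec ι × Biv ι) × (Vec ι × Biv ι))
    (hA : A = fun z => ((z.1 ∘ Sum.inl, fun μ ν => z.2 (Sum.inl μ) (Sum.inl ν)),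
      ((fun ρ => - ∑ η, z.2 (Sum.inl η) (Sum.inr (η, ρ))),
       (fun l k => - z.1 (Sum.inr (l, k))))))
    (hB : B = fun z => ((z.1 ∘ Sum.inl, fun l k => z.1 (Sum.inr (l, k))),
      ((fun ρ => - ∑ η, z.2 (Sum.inl η) (Sum.inr (η, ρ))),
       (fun μ ν => z.2 (Sum.inl μ) (Sum.inl ν)))))
    (z : Vec (ι ⊕ ι × ι) × Biv (ι ⊕ ι × ι)) (hz : GoodP z) :
    -- `(α²_M)* θ_{∧²TM} = − d_T^2 θ²_M`:
    (∀ w, GoodP w →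
      covPair (A z).2 (fderiv ℝ A z w).1 =
        - dT2 θ z (Matrix.vecCons w (fun i => i.elim0))) ∧
    -- `(β²_M)* θ_{∧²T*M} = i_T^2 ω²_M` (`ω²_M = dθ²_M`):
    (∀ w, GoodP w →
      covPair (B z).2 (fderiv ℝ B z w).1 =
        iT2 (Dext θ) z (Matrix.vecCons w (fun i => i.elim0))) ∧
    -- consequently `(α²_M)* ω_{∧²TM} = d_T^2 ω²_M = (β²_M)* ω_{∧²T*M}`:
    (∀ w1 w2, GoodP w1 → GoodP w2 →
      covPair (fderiv ℝ A z w1).2 (fderiv ℝ A z w2).1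
          - covPair (fderiv ℝ A z w2).2 (fderiv ℝ A z w1).1 =
        dT2 (Dext θ) z (Matrix.vecCons w1 (Matrix.vecCons w2 (fun i => i.elim0))) ∧
      covPair (fderiv ℝ B z w1).2 (fderiv ℝ B z w2).1
          - covPair (fderiv ℝ B z w2).2 (fderiv ℝ B z w1).1 =
        dT2 (Dext θ) z (Matrix.vecCons w1 (Matrix.vecCons w2 (fun i => i.elim0)))) := by
  have hθ' : θ = thetaF := by rw [hθ]; rfl
  subst hθ' hA hB
  set A := fun z : Vec (ι ⊕ ι × ι) × Biv (ι ⊕ ι × ι) =>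
    ((z.1 ∘ Sum.inl, fun μ ν => z.2 (Sum.inl μ) (Sum.inl ν)),
      ((fun ρ => - ∑ η, z.2 (Sum.inl η) (Sum.inr (η, ρ))),
       (fun l k => - z.1 (Sum.inr (l, k))))) with hA
  set B := fun z : Vec (ι ⊕ ι × ι) × Biv (ι ⊕ ι × ι) =>
    ((z.1 ∘ Sum.inl, fun l k => z.1 (Sum.inr (l, k))),
      ((fun ρ => - ∑ η, z.2 (Sum.inl η) (Sum.inr (η, ρ))),
       (fun μ ν => z.2 (Sum.inl μ) (Sum.inl ν)))) with hB
  have hA1 : ∀ x y, A (x + y) = A x + A y := by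
    intro x y
    refine Prod.ext (Prod.ext rfl rfl) (Prod.ext ?_ ?_)
    · funext ρ
      show -∑ η, (x.2 _ _ + y.2 _ _) = _
      simp [Finset.sum_add_distrib]; ring
    · funext l k
      show -(x.1 _ + y.1 _) = _
      simp; ring
  have hA2 : ∀ (c : ℝ) x, A (c • x) = c • A x := by
    intro c x
    refine Prod.ext (Prod.ext rfl rfl) (Prod.ext ?_ ?_)
    · funext ρ
      show -∑ η, c * x.2 _ _ = _
      simp [hA, Finset.mul_sum]
    · funext l k
      show -(c * x.1 _) = _
      simp [hA, smul_eq_mul]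
  have hB1 : ∀ x y, B (x + y) = B x + B y := by
    intro x y
    refine Prod.ext (Prod.ext rfl rfl) (Prod.ext ?_ rfl)
    funext ρ
    show -∑ η, (x.2 _ _ + y.2 _ _) = _
    simp [Finset.sum_add_distrib]; ring
  have hB2 : ∀ (c : ℝ) x, B (c • x) = c • B x := by
    intro c x
    refine Prod.ext (Prod.ext rfl rfl) (Prod.ext ?_ rfl)
    funext ρ
    show -∑ η, c * x.2 _ _ = _
    simp [hB, Finset.mul_sum]
  refine ⟨?_, ?_, ?_⟩
  · intro w hw
    rw [fderiv_lin_apply A hA1 hA2, dT2, Dext_iT2_thetaF, psi_eval]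
    simp only [Matrix.cons_val_zero, hA, covPair]
    rw [lhs1, keyDGC z w hz.1, key1 z w hz]
    have e : ∑ x, ∑ x_1, -z.1 (Sum.inr (x, x_1)) * w.2 (Sum.inl x) (Sum.inl x_1)
        = - ∑ μ, ∑ ν, w.2 (Sum.inl μ) (Sum.inl ν) * z.1 (Sum.inr (μ, ν)) := by
      simp only [← Finset.sum_neg_distrib]
      exact sum2_congr fun a b => by ring
    rw [e]; ring
  · intro w hw
    rw [fderiv_lin_apply B hB1 hB2, psi_eval]
    simp only [Matrix.cons_val_zero, hB, covPair]
    rw [lhs1, key1 z w hz, keyS2 z w hw.1]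
    ring
  · intro w1 w2 hw1 hw2
    rw [fderiv_lin_apply A hA1 hA2, fderiv_lin_apply A hA1 hA2,
      fderiv_lin_apply B hB1 hB2, fderiv_lin_apply B hB1 hB2,
      dT2, Dext_psi, iT2_DD_zero]
    simp only [Matrix.cons_val_zero, Matrix.cons_val_one, Matrix.head_cons, hA, hB,
      covPair, sub_zero]
    rw [key1 w1 w2 hw1, key1 w2 w1 hw2, keyS2 w1 w2 hw2.1, keyS2 w2 w1 hw1.1]
    have e1 : ∑ x, ∑ x_1, -w1.1 (Sum.inr (x, x_1)) * w2.2 (Sum.inl x) (Sum.inl x_1)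
        = - ∑ μ, ∑ ν, w2.2 (Sum.inl μ) (Sum.inl ν) * w1.1 (Sum.inr (μ, ν)) := by
      simp only [← Finset.sum_neg_distrib]
      exact sum2_congr fun a b => by ring
    have e2 : ∑ x, ∑ x_1, -w2.1 (Sum.inr (x, x_1)) * w1.2 (Sum.inl x) (Sum.inl x_1)
        = - ∑ μ, ∑ ν, w1.2 (Sum.inl μ) (Sum.inl ν) * w2.1 (Sum.inr (μ, ν)) := by
      simp only [← Finset.sum_neg_distrib]
      exact sum2_congr fun a b => by ring
    have e3 : ∑ x, ∑ x_1, w1.2 (Sum.inl x) (Sum.inl x_1) * w2.1 (Sum.inr (x, x_1))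
        = ∑ μ, ∑ ν, w1.2 (Sum.inl μ) (Sum.inl ν) * w2.1 (Sum.inr (μ, ν)) := rfl
    rw [lhs1 w1 w2, lhs1 w2 w1, e1, e2]
    constructor <;> ring

end
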